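/- arXiv:1810.06474 — 2 statements merged into one kernel-verified Lean document; each statement's English description precedes it below -/
import Mathlib

section
/- For interval-valued random variables X₁, X₂ with centers C₁, C₂ and ranges R₁, R₂ ≥ 0, for k ∈ {1,2,3} the symbolic correlation Cor_k(X₁, X₂) := (Cov(C₁,C₂) + δ_k E(R₁R₂)) / √((Var(C₁) + δ_k E(R₁²))(Var(C₂) + δ_k E(R₂²))) satisfies -1 ≤ Cor_k(X₁, X₂) ≤ 1, provided the denominator is positive. -/
open MeasureTheory ProbabilityTheory

/-- Covariance of two real random variables. -/
noncomputable def covf {Ω : Type*} [MeasurableSpace Ω] (μ : Measure Ω) (X Y : Ω → ℝ) : ℝ :=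
  ∫ ω, (X ω - ∫ x, X x ∂μ) * (Y ω - ∫ x, Y x ∂μ) ∂μ

/-- The weights δ₁ = 0, δ₂ = 1/4, δ₃ = 1/12. -/
noncomputable def delta (k : ℕ) : ℝ := if k = 1 then 0 else if k = 2 then 1/4 else 1/12

lemma my_cs {Ω : Type*} [MeasurableSpace Ω] (μ : Measure Ω) {f g : Ω → ℝ}
    (hf : MemLp f 2 μ) (hg : MemLp g 2 μ) :
    |∫ ω, f ω * g ω ∂μ| ≤ Real.sqrt (∫ ω, (f ω) ^ 2 ∂μ) * Real.sqrt (∫ ω, (g ω) ^ 2 ∂μ) := by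
  have h1 : |∫ ω, f ω * g ω ∂μ| ≤ ∫ ω, |f ω| * |g ω| ∂μ := by
    simpa [abs_mul] using norm_integral_le_integral_norm (μ := μ) (fun ω => f ω * g ω)
  have hconj : (2 : ℝ).HolderConjugate 2 := by constructor <;> norm_num
  have hfa : MemLp (fun ω => |f ω|) (ENNReal.ofReal 2) μ := by
    convert hf.abs using 2 <;> simp
  have hga : MemLp (fun ω => |g ω|) (ENNReal.ofReal 2) μ := by
    convert hg.abs using 2 <;> simp
  have h2 := integral_mul_le_Lp_mul_Lq_of_nonneg hconj
    (ae_of_all μ fun ω => abs_nonneg (f ω)) (ae_of_all μ fun ω => abs_nonneg (g ω)) hfa hga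
  have e1 : ∀ (h : Ω → ℝ), (∫ ω, |h ω| ^ (2:ℝ) ∂μ) ^ (1/2 : ℝ)
      = Real.sqrt (∫ ω, (h ω) ^ 2 ∂μ) := by
    intro h
    rw [Real.sqrt_eq_rpow]
    congr 1
    refine integral_congr_ae (ae_of_all μ fun ω => ?_)
    simp [Real.rpow_two, sq_abs]
  rw [e1, e1] at h2
  exact h1.trans h2

lemma my_key {x y a b c r d : ℝ} (hx : 0 ≤ x) (hy : 0 ≤ y) (ha : 0 ≤ a) (hb : 0 ≤ b)
    (hd : 0 ≤ d) (hc : |c| ≤ Real.sqrt (x * y)) (hr0 : 0 ≤ r) (hr : r ≤ Real.sqrt (a * b)) :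
    |c + d * r| ≤ Real.sqrt ((x + d * a) * (y + d * b)) := by
  set u := Real.sqrt (x * y) with hu
  set v := Real.sqrt (a * b) with hv
  set w1 := Real.sqrt (x * b) with hw1
  set w2 := Real.sqrt (a * y) with hw2
  have hu2 : u ^ 2 = x * y := Real.sq_sqrt (mul_nonneg hx hy)
  have hv2 : v ^ 2 = a * b := Real.sq_sqrt (mul_nonneg ha hb)
  have hw12 : w1 ^ 2 = x * b := Real.sq_sqrt (mul_nonneg hx hb)
  have hw22 : w2 ^ 2 = a * y := Real.sq_sqrt (mul_nonneg ha hy)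
  have huv : u * v = w1 * w2 := by
    rw [hu, hv, hw1, hw2, ← Real.sqrt_mul (mul_nonneg hx hy), ← Real.sqrt_mul (mul_nonneg hx hb)]
    ring_nf
  have h1 : |c + d * r| ≤ u + d * v := by
    calc |c + d * r| ≤ |c| + d * r := by
          have := abs_add_le c (d * r)
          rwa [abs_of_nonneg (mul_nonneg hd hr0)] at this
      _ ≤ u + d * v := by
          exact add_le_add hc (mul_le_mul_of_nonneg_left hr hd)
  refine h1.trans ?_
  have hun : 0 ≤ u := Real.sqrt_nonneg _
  have hvn : 0 ≤ v := Real.sqrt_nonneg _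
  rw [show u + d * v = Real.sqrt ((u + d * v) ^ 2) from
    (Real.sqrt_sq (by positivity)).symm]
  apply Real.sqrt_le_sqrt
  have h2uv : 2 * (u * v) ≤ w1 ^ 2 + w2 ^ 2 := by nlinarith [sq_nonneg (w1 - w2)]
  have h3 := mul_le_mul_of_nonneg_left h2uv hd
  calc (u + d * v) ^ 2 = x * y + d * (2 * (u * v)) + d ^ 2 * (a * b) := by
        rw [← hu2, ← hv2]; ring
    _ ≤ x * y + d * (w1 ^ 2 + w2 ^ 2) + d ^ 2 * (a * b) := by linarith
    _ = (x + d * a) * (y + d * b) := by rw [hw12, hw22]; ring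

/-- For k ∈ {1,2,3}, the symbolic correlation lies in [-1, 1]. -/
theorem symbolic_cor_bounds {Ω : Type*} [MeasurableSpace Ω] (μ : Measure Ω)
    [IsProbabilityMeasure μ] (C1 C2 R1 R2 : Ω → ℝ)
    (hC1 : MemLp C1 2 μ) (hC2 : MemLp C2 2 μ) (hR1 : MemLp R1 2 μ) (hR2 : MemLp R2 2 μ)
    (hC1m : AEMeasurable C1 μ) (hC2m : AEMeasurable C2 μ)
    (hR1m : AEMeasurable R1 μ) (hR2m : AEMeasurable R2 μ)
    (hR1pos : ∀ ω, 0 ≤ R1 ω) (hR2pos : ∀ ω, 0 ≤ R2 ω)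
    (k : ℕ) (hk : k ∈ ({1, 2, 3} : Set ℕ))
    (hden : 0 < Real.sqrt ((variance C1 μ + delta k * ∫ ω, (R1 ω) ^ 2 ∂μ) *
      (variance C2 μ + delta k * ∫ ω, (R2 ω) ^ 2 ∂μ))) :
    -1 ≤ (covf μ C1 C2 + delta k * ∫ ω, R1 ω * R2 ω ∂μ) /
        Real.sqrt ((variance C1 μ + delta k * ∫ ω, (R1 ω) ^ 2 ∂μ) *
          (variance C2 μ + delta k * ∫ ω, (R2 ω) ^ 2 ∂μ)) ∧
      (covf μ C1 C2 + delta k * ∫ ω, R1 ω * R2 ω ∂μ) /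
        Real.sqrt ((variance C1 μ + delta k * ∫ ω, (R1 ω) ^ 2 ∂μ) *
          (variance C2 μ + delta k * ∫ ω, (R2 ω) ^ 2 ∂μ)) ≤ 1 := by
  set d := delta k with hdk
  have hd : 0 ≤ d := by
    rw [hdk, delta]; split_ifs <;> norm_num
  -- centered functions
  set f := fun ω => C1 ω - ∫ x, C1 x ∂μ with hf
  set g := fun ω => C2 ω - ∫ x, C2 x ∂μ with hg
  have hfL : MemLp f 2 μ := hC1.sub (memLp_const _)
  have hgL : MemLp g 2 μ := hC2.sub (memLp_const _)
  have hvar1 : variance C1 μ = ∫ ω, (f ω) ^ 2 ∂μ := by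
    rw [variance_eq_integral hC1m]
  have hvar2 : variance C2 μ = ∫ ω, (g ω) ^ 2 ∂μ := by
    rw [variance_eq_integral hC2m]
  have hcov : |covf μ C1 C2| ≤ Real.sqrt (variance C1 μ * variance C2 μ) := by
    rw [hvar1, hvar2, Real.sqrt_mul (integral_nonneg fun ω => sq_nonneg (f ω))]
    exact my_cs μ hfL hgL
  have hRint : Integrable (fun ω => R1 ω * R2 ω) μ := by
    refine (hR1.integrable_sq.add hR2.integrable_sq).mono'
      (hR1.aestronglyMeasurable.mul hR2.aestronglyMeasurable) ?_
    refine ae_of_all μ fun ω => ?_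
    have : |R1 ω * R2 ω| = R1 ω * R2 ω := abs_of_nonneg (mul_nonneg (hR1pos ω) (hR2pos ω))
    rw [Real.norm_eq_abs, this]
    simp only [Pi.add_apply]
    nlinarith [sq_nonneg (R1 ω - R2 ω), sq_nonneg (R1 ω + R2 ω)]
  have hr0 : 0 ≤ ∫ ω, R1 ω * R2 ω ∂μ :=
    integral_nonneg fun ω => mul_nonneg (hR1pos ω) (hR2pos ω)
  have hrle : (∫ ω, R1 ω * R2 ω ∂μ) ≤ Real.sqrt ((∫ ω, (R1 ω) ^ 2 ∂μ) * ∫ ω, (R2 ω) ^ 2 ∂μ) := by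
    have := my_cs μ hR1 hR2
    rw [← Real.sqrt_mul (integral_nonneg fun ω => sq_nonneg (R1 ω))] at this
    exact (le_abs_self _).trans this
  have hmain := my_key (variance_nonneg C1 μ) (variance_nonneg C2 μ)
    (integral_nonneg fun ω => sq_nonneg (R1 ω)) (integral_nonneg fun ω => sq_nonneg (R2 ω))
    hd hcov hr0 hrle
  rw [abs_le] at hmain
  constructor
  · rw [le_div_iff₀ hden]; linarith [hmain.1]
  · rw [div_le_one hden]; exact hmain.2
end

section
/- In the micro-data model A_j = C_j + U R_j/2 and A_l = C_l + U R_l/2 with a common weight U independent of (C_j, R_j, C_l, R_l), E(U) = 0 and Var(U) = 1 (e.g., U uniform on {-1, 1}), one has Cov(A_j, A_l) = Cov(C_j, C_l) + (1/4)E(R_jR_l) and Var(A_j) = Var(C_j) + (1/4)E(R_j²), i.e., the micro-data covariance matches the second symbolic covariance definition Σ₂. -/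
open MeasureTheory ProbabilityTheory

lemma l2_mul_integrable {Ω : Type*} [MeasurableSpace Ω] {μ : Measure Ω} {f g : Ω → ℝ}
    (hf : MemLp f 2 μ) (hg : MemLp g 2 μ) : Integrable (fun ω => f ω * g ω) μ := by
  have h : MemLp (f • g) 1 μ := hg.smul hf
  exact memLp_one_iff_integrable.mp h

/-- The covariance computation, as a standalone lemma. -/
lemma covf_aux {Ω : Type*} [MeasurableSpace Ω] (μ : Measure Ω)
    [IsProbabilityMeasure μ] (Cj Rj Cl Rl U : Ω → ℝ)
    (hCj : MemLp Cj 2 μ) (hRj : MemLp Rj 2 μ) (hCl : MemLp Cl 2 μ) (hRl : MemLp Rl 2 μ)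
    (hU : MemLp U 2 μ)
    (hindep : IndepFun U (fun ω => (Cj ω, Rj ω, Cl ω, Rl ω)) μ)
    (hU0 : ∫ ω, U ω ∂μ = 0) (hUvar : variance U μ = 1) :
    covf μ (fun ω => Cj ω + U ω * Rj ω / 2) (fun ω => Cl ω + U ω * Rl ω / 2) =
        covf μ Cj Cl + (1/4) * ∫ ω, Rj ω * Rl ω ∂μ := by
  set V : Ω → ℝ × ℝ × ℝ × ℝ := fun ω => (Cj ω, Rj ω, Cl ω, Rl ω) with hV
  have hUint : Integrable U μ := hU.integrable one_le_two
  have hU2int : Integrable (fun ω => U ω ^ 2) μ := by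
    simpa [pow_two] using l2_mul_integrable hU hU
  have hEU2 : ∫ ω, U ω ^ 2 ∂μ = 1 := by
    have h := variance_eq_sub hU
    rw [hUvar, hU0] at h
    simp only [Pi.pow_apply] at h
    linarith [h]
  -- key independence facts
  have keyI0 : ∀ (g : ℝ × ℝ × ℝ × ℝ → ℝ), Measurable g → Integrable (fun ω => g (V ω)) μ →
      Integrable (fun ω => U ω * g (V ω)) μ := by
    intro g hg hgint
    have h : IndepFun U (fun ω => g (V ω)) μ := hindep.comp measurable_id hg
    simpa [Pi.mul_def] using h.integrable_mul hUint hgint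
  have keyI2 : ∀ (g : ℝ × ℝ × ℝ × ℝ → ℝ), Measurable g → Integrable (fun ω => g (V ω)) μ →
      Integrable (fun ω => U ω ^ 2 * g (V ω)) μ := by
    intro g hg hgint
    have h : IndepFun (fun ω => U ω ^ 2) (fun ω => g (V ω)) μ :=
      hindep.comp (measurable_id.pow_const 2) hg
    simpa [Pi.mul_def] using h.integrable_mul hU2int hgint
  have key0 : ∀ (g : ℝ × ℝ × ℝ × ℝ → ℝ), Measurable g → Integrable (fun ω => g (V ω)) μ →
      ∫ ω, U ω * g (V ω) ∂μ = 0 := by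
    intro g hg hgint
    have h : IndepFun U (fun ω => g (V ω)) μ := hindep.comp measurable_id hg
    have h2 := h.integral_mul_eq_mul_integral hUint.aestronglyMeasurable hgint.aestronglyMeasurable
    simpa [Pi.mul_def, hU0] using h2
  have key2 : ∀ (g : ℝ × ℝ × ℝ × ℝ → ℝ), Measurable g → Integrable (fun ω => g (V ω)) μ →
      ∫ ω, U ω ^ 2 * g (V ω) ∂μ = ∫ ω, g (V ω) ∂μ := by
    intro g hg hgint
    have h : IndepFun (fun ω => U ω ^ 2) (fun ω => g (V ω)) μ :=
      hindep.comp (measurable_id.pow_const 2) hg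
    have h2 := h.integral_mul_eq_mul_integral hU2int.aestronglyMeasurable hgint.aestronglyMeasurable
    rw [hEU2] at h2
    simpa [Pi.mul_def] using h2
  set a : ℝ := ∫ ω, Cj ω ∂μ with ha
  set b : ℝ := ∫ ω, Cl ω ∂μ with hb
  have hCja : MemLp (fun ω => Cj ω - a) 2 μ := hCj.sub (memLp_const a)
  have hClb : MemLp (fun ω => Cl ω - b) 2 μ := hCl.sub (memLp_const b)
  have hURj : Integrable (fun ω => U ω * Rj ω) μ := l2_mul_integrable hU hRj
  have hURl : Integrable (fun ω => U ω * Rl ω) μ := l2_mul_integrable hU hRl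
  have hCC : Integrable (fun ω => (Cj ω - a) * (Cl ω - b)) μ := l2_mul_integrable hCja hClb
  have hRR : Integrable (fun ω => Rj ω * Rl ω) μ := l2_mul_integrable hRj hRl
  -- means
  have hRjEq : (fun ω => Rj ω) = fun ω => (fun p : ℝ × ℝ × ℝ × ℝ => p.2.1) (V ω) := rfl
  have h0j : ∫ ω, U ω * Rj ω ∂μ = 0 := key0 (fun p => p.2.1) (by fun_prop)
    (by simpa using hRj.integrable one_le_two)
  have h0l : ∫ ω, U ω * Rl ω ∂μ = 0 := key0 (fun p => p.2.2.2) (by fun_prop)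
    (by simpa using hRl.integrable one_le_two)
  have hmj : ∫ ω, (Cj ω + U ω * Rj ω / 2) ∂μ = a := by
    rw [integral_add (hCj.integrable one_le_two) (hURj.div_const 2), integral_div, h0j]
    simp [ha]
  have hml : ∫ ω, (Cl ω + U ω * Rl ω / 2) ∂μ = b := by
    rw [integral_add (hCl.integrable one_le_two) (hURl.div_const 2), integral_div, h0l]
    simp [hb]
  -- cross and quartic terms
  have g1m : Measurable (fun p : ℝ × ℝ × ℝ × ℝ => (p.1 - a) * p.2.2.2) := by fun_prop
  have g2m : Measurable (fun p : ℝ × ℝ × ℝ × ℝ => (p.2.2.1 - b) * p.2.1) := by fun_prop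
  have g3m : Measurable (fun p : ℝ × ℝ × ℝ × ℝ => p.2.1 * p.2.2.2) := by fun_prop
  have g1i : Integrable (fun ω => (Cj ω - a) * Rl ω) μ := l2_mul_integrable hCja hRl
  have g2i : Integrable (fun ω => (Cl ω - b) * Rj ω) μ := l2_mul_integrable hClb hRj
  have cross1 : ∫ ω, U ω * ((Cj ω - a) * Rl ω) ∂μ = 0 := key0 _ g1m g1i
  have cross2 : ∫ ω, U ω * ((Cl ω - b) * Rj ω) ∂μ = 0 := key0 _ g2m g2i
  have quart : ∫ ω, U ω ^ 2 * (Rj ω * Rl ω) ∂μ = ∫ ω, Rj ω * Rl ω ∂μ := key2 _ g3m hRR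
  have i1 : Integrable (fun ω => U ω * ((Cj ω - a) * Rl ω) / 2) μ :=
    (keyI0 _ g1m g1i).div_const 2
  have i2 : Integrable (fun ω => U ω * ((Cl ω - b) * Rj ω) / 2) μ :=
    (keyI0 _ g2m g2i).div_const 2
  have i3 : Integrable (fun ω => U ω ^ 2 * (Rj ω * Rl ω) / 4) μ :=
    (keyI2 _ g3m hRR).div_const 4
  -- main computation
  rw [covf, hmj, hml]
  have expand : ∀ ω, (Cj ω + U ω * Rj ω / 2 - a) * (Cl ω + U ω * Rl ω / 2 - b)
      = (Cj ω - a) * (Cl ω - b) + (U ω * ((Cj ω - a) * Rl ω) / 2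
        + (U ω * ((Cl ω - b) * Rj ω) / 2 + U ω ^ 2 * (Rj ω * Rl ω) / 4)) := by
    intro ω; ring
  simp only [expand]
  have i23 : Integrable (fun ω => U ω * ((Cl ω - b) * Rj ω) / 2
      + U ω ^ 2 * (Rj ω * Rl ω) / 4) μ := i2.add i3
  have i123 : Integrable (fun ω => U ω * ((Cj ω - a) * Rl ω) / 2
      + (U ω * ((Cl ω - b) * Rj ω) / 2 + U ω ^ 2 * (Rj ω * Rl ω) / 4)) μ := i1.add i23
  rw [integral_add hCC i123, integral_add i1 i23, integral_add i2 i3,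
    integral_div, integral_div, integral_div, cross1, cross2, quart, covf]
  rw [← ha, ← hb]
  ring

/-- Common weight U with Var(U) = 1 yields the second symbolic covariance Σ₂. -/
theorem microdata_common_weight_sigma2 {Ω : Type*} [MeasurableSpace Ω] (μ : Measure Ω)
    [IsProbabilityMeasure μ] (Cj Rj Cl Rl U : Ω → ℝ)
    (hCj : MemLp Cj 2 μ) (hRj : MemLp Rj 2 μ) (hCl : MemLp Cl 2 μ) (hRl : MemLp Rl 2 μ)
    (hU : MemLp U 2 μ)
    (hCjm : Measurable Cj) (hRjm : Measurable Rj) (hClm : Measurable Cl) (hRlm : Measurable Rl)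
    (hUm : Measurable U)
    (hRjpos : ∀ ω, 0 ≤ Rj ω) (hRlpos : ∀ ω, 0 ≤ Rl ω)
    (hindep : IndepFun U (fun ω => (Cj ω, Rj ω, Cl ω, Rl ω)) μ)
    (hU0 : ∫ ω, U ω ∂μ = 0) (hUvar : variance U μ = 1) :
    covf μ (fun ω => Cj ω + U ω * Rj ω / 2) (fun ω => Cl ω + U ω * Rl ω / 2) =
        covf μ Cj Cl + (1/4) * ∫ ω, Rj ω * Rl ω ∂μ ∧
      variance (fun ω => Cj ω + U ω * Rj ω / 2) μ =
        variance Cj μ + (1/4) * ∫ ω, (Rj ω) ^ 2 ∂μ := by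
  have hjj : IndepFun U (fun ω => (Cj ω, Rj ω, Cj ω, Rj ω)) μ := by
    have : (fun ω => (Cj ω, Rj ω, Cj ω, Rj ω)) =
        (fun p : ℝ × ℝ × ℝ × ℝ => (p.1, p.2.1, p.1, p.2.1)) ∘ (fun ω => (Cj ω, Rj ω, Cl ω, Rl ω)) :=
      rfl
    rw [this]
    exact hindep.comp measurable_id (by fun_prop)
  constructor
  · exact covf_aux μ Cj Rj Cl Rl U hCj hRj hCl hRl hU hindep hU0 hUvar
  · -- variance part
    have hEU2 : ∫ ω, U ω ^ 2 ∂μ = 1 := by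
      have h := variance_eq_sub hU
      rw [hUvar, hU0] at h
      simp only [Pi.pow_apply] at h
      linarith [h]
    -- MemLp of A_j
    have hU2Rj2 : Integrable (fun ω => U ω ^ 2 * Rj ω ^ 2) μ := by
      have h : IndepFun (fun ω => U ω ^ 2) (fun ω => Rj ω ^ 2) μ := by
        have := hindep.comp (measurable_id.pow_const 2)
          (show Measurable (fun p : ℝ × ℝ × ℝ × ℝ => p.2.1 ^ 2) by fun_prop)
        exact this
      simpa [Pi.mul_def] using h.integrable_mul
        (by simpa [pow_two] using l2_mul_integrable hU hU)
        (by simpa [pow_two] using l2_mul_integrable hRj hRj)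
    have hURjL2 : MemLp (fun ω => U ω * Rj ω) 2 μ := by
      rw [memLp_two_iff_integrable_sq (f := fun ω => U ω * Rj ω) (hUm.mul hRjm).aestronglyMeasurable]
      simpa [mul_pow] using hU2Rj2
    have hURjL2' : MemLp (fun ω => U ω * Rj ω / 2) 2 μ := by
      simpa [div_eq_inv_mul] using hURjL2.const_mul (2⁻¹ : ℝ)
    have hAj : MemLp (fun ω => Cj ω + U ω * Rj ω / 2) 2 μ := hCj.add hURjL2'
    have hvA : variance (fun ω => Cj ω + U ω * Rj ω / 2) μ
        = covf μ (fun ω => Cj ω + U ω * Rj ω / 2) (fun ω => Cj ω + U ω * Rj ω / 2) := by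
      rw [variance_eq_integral hAj.aestronglyMeasurable.aemeasurable, covf]
      congr 1
      ext ω
      simp [pow_two]
    have hvC : variance Cj μ = covf μ Cj Cj := by
      rw [variance_eq_integral hCj.aestronglyMeasurable.aemeasurable, covf]
      congr 1
      ext ω
      simp [pow_two]
    rw [hvA, hvC, covf_aux μ Cj Rj Cj Rj U hCj hRj hCj hRj hU hjj hU0 hUvar]
    simp only [← pow_two]
end
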